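/- For deterministic quantities the Bellman operator preserves extended quadraticity: if V: R^n → R ∪ {+∞} is a convex extended quadratic function, the dynamics are affine f(x,u) = Ax + Bu + c, and the stage cost g(x,u) is a convex extended quadratic in (x,u) that is strictly convex in u, then Q(x,u) = g(x,u) + V(Ax + Bu + c) is a convex extended quadratic in (x,u), and (provided inf_u Q(x,u) > −∞ for all x in the domain) the function x ↦ inf_u Q(x,u) is a convex extended quadratic function of x. -/

import Mathlib

open Matrix


open Matrix

noncomputable def quadPart {n : ℕ} (P : Matrix (Fin n) (Fin n) ℝ) (q : Fin n → ℝ) (r : ℝ)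
    (x : Fin n → ℝ) : ℝ :=
  (1 / 2) * (x ⬝ᵥ P.mulVec x + 2 * (q ⬝ᵥ x) + r)

noncomputable def extQuad {n : ℕ} {ι : Type} [Fintype ι]
    (P : Matrix (Fin n) (Fin n) ℝ) (q : Fin n → ℝ) (r : ℝ)
    (F : Matrix ι (Fin n) ℝ) (g : ι → ℝ) (x : Fin n → ℝ) : EReal :=
  if F.mulVec x + g = 0 then ((quadPart P q r x : ℝ) : EReal) else ⊤

noncomputable def quadPart2 {n m : ℕ}
    (Pxx : Matrix (Fin n) (Fin n) ℝ) (Pxu : Matrix (Fin n) (Fin m) ℝ)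
    (Puu : Matrix (Fin m) (Fin m) ℝ) (qx : Fin n → ℝ) (qu : Fin m → ℝ) (r : ℝ)
    (x : Fin n → ℝ) (u : Fin m → ℝ) : ℝ :=
  (1 / 2) * (x ⬝ᵥ Pxx.mulVec x + 2 * (x ⬝ᵥ Pxu.mulVec u) + u ⬝ᵥ Puu.mulVec u +
    2 * (qx ⬝ᵥ x) + 2 * (qu ⬝ᵥ u) + r)

noncomputable def extQuad2 {n m p : ℕ}
    (Pxx : Matrix (Fin n) (Fin n) ℝ) (Pxu : Matrix (Fin n) (Fin m) ℝ)
    (Puu : Matrix (Fin m) (Fin m) ℝ) (qx : Fin n → ℝ) (qu : Fin m → ℝ) (r : ℝ)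
    (Fx : Matrix (Fin p) (Fin n) ℝ) (Fu : Matrix (Fin p) (Fin m) ℝ) (g : Fin p → ℝ)
    (x : Fin n → ℝ) (u : Fin m → ℝ) : EReal :=
  if Fx.mulVec x + Fu.mulVec u + g = 0 then
    ((quadPart2 Pxx Pxu Puu qx qu r x u : ℝ) : EReal)
  else ⊤

/-- Convexity of an extended-real-valued function. -/
def ERealConvexOn {E : Type} [AddCommMonoid E] [Module ℝ E] (f : E → EReal) : Prop :=
  ∀ x y : E, ∀ a b : ℝ, 0 ≤ a → 0 ≤ b → a + b = 1 →
    f (a • x + b • y) ≤ (a : EReal) * f x + (b : EReal) * f y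

/-- Joint convexity of a two-argument extended-real-valued function. -/
def ERealConvexOnPair {n m : ℕ} (f : (Fin n → ℝ) → (Fin m → ℝ) → EReal) : Prop :=
  ∀ x u y v, ∀ a b : ℝ, 0 ≤ a → 0 ≤ b → a + b = 1 →
    f (a • x + b • y) (a • u + b • v) ≤ (a : EReal) * f x u + (b : EReal) * f y v

/-- `f : Rⁿ → R ∪ {+∞}` is an extended quadratic function. -/
def IsExtQuadFun {n : ℕ} (f : (Fin n → ℝ) → EReal) : Prop :=
  ∃ (p : ℕ) (P : Matrix (Fin n) (Fin n) ℝ) (q : Fin n → ℝ) (r : ℝ)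
    (F : Matrix (Fin p) (Fin n) ℝ) (g : Fin p → ℝ),
    P.IsSymm ∧ ∀ x, f x = extQuad P q r F g x

/-- `f(x,u)` is an extended quadratic function of `(x,u)`. -/
def IsExtQuadPair {n m : ℕ} (f : (Fin n → ℝ) → (Fin m → ℝ) → EReal) : Prop :=
  ∃ (p : ℕ) (Pxx : Matrix (Fin n) (Fin n) ℝ) (Pxu : Matrix (Fin n) (Fin m) ℝ)
    (Puu : Matrix (Fin m) (Fin m) ℝ) (qx : Fin n → ℝ) (qu : Fin m → ℝ) (r : ℝ)
    (Fx : Matrix (Fin p) (Fin n) ℝ) (Fu : Matrix (Fin p) (Fin m) ℝ) (g : Fin p → ℝ),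
    Pxx.IsSymm ∧ Puu.IsSymm ∧ ∀ x u, f x u = extQuad2 Pxx Pxu Puu qx qu r Fx Fu g x u


section Helpers

/-- distributivity for nonneg real scalar over non-bot ERs -/
lemma bpq_distrib (a : ℝ) (ha : 0 ≤ a) (p q : EReal) (hp : p ≠ ⊥) (hq : q ≠ ⊥) :
    (a : EReal) * (p + q) = (a : EReal) * p + (a : EReal) * q := by
  rcases eq_or_lt_of_le ha with h0 | h0
  · simp [← h0]
  · induction p with
    | bot => exact absurd rfl hp
    | top =>
      rw [EReal.top_add_of_ne_bot hq, EReal.coe_mul_top_of_pos h0]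
      rw [EReal.top_add_of_ne_bot]
      induction q with
      | bot => exact absurd rfl hq
      | top => simp [EReal.coe_mul_top_of_pos h0]
      | coe s => rw [← EReal.coe_mul]; exact EReal.coe_ne_bot _
    | coe s =>
      induction q with
      | bot => exact absurd rfl hq
      | top =>
        rw [EReal.add_top_of_ne_bot (by simp), EReal.coe_mul_top_of_pos h0, ← EReal.coe_mul,
          EReal.add_top_of_ne_bot (EReal.coe_ne_bot _)]
      | coe t =>
        rw [← EReal.coe_add, ← EReal.coe_mul, ← EReal.coe_mul, ← EReal.coe_mul, ← EReal.coe_add]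
        ring_nf

lemma bpq_extQuad_ne_bot {n : ℕ} {ι : Type} [Fintype ι] (P : Matrix (Fin n) (Fin n) ℝ)
    (q : Fin n → ℝ) (r : ℝ) (F : Matrix ι (Fin n) ℝ) (g : ι → ℝ) (x : Fin n → ℝ) :
    extQuad P q r F g x ≠ ⊥ := by
  unfold extQuad; split <;> simp

lemma bpq_extQuad2_ne_bot {n m p : ℕ} (Pxx : Matrix (Fin n) (Fin n) ℝ)
    (Pxu : Matrix (Fin n) (Fin m) ℝ) (Puu : Matrix (Fin m) (Fin m) ℝ)
    (qx : Fin n → ℝ) (qu : Fin m → ℝ) (r : ℝ) (Fx : Matrix (Fin p) (Fin n) ℝ)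
    (Fu : Matrix (Fin p) (Fin m) ℝ) (g : Fin p → ℝ) (x : Fin n → ℝ) (u : Fin m → ℝ) :
    extQuad2 Pxx Pxu Puu qx qu r Fx Fu g x u ≠ ⊥ := by
  unfold extQuad2; split <;> simp

/-- sum of pair-convex functions is pair-convex -/
lemma bpq_add_convex_pair {n m : ℕ} (f g : (Fin n → ℝ) → (Fin m → ℝ) → EReal)
    (hf : ERealConvexOnPair f) (hg : ERealConvexOnPair g)
    (hfb : ∀ x u, f x u ≠ ⊥) (hgb : ∀ x u, g x u ≠ ⊥) :
    ERealConvexOnPair (fun x u => f x u + g x u) := by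
  intro x u y v a b ha hb hab
  dsimp only
  calc f (a • x + b • y) (a • u + b • v) + g (a • x + b • y) (a • u + b • v)
      ≤ ((a:EReal) * f x u + (b:EReal) * f y v) + ((a:EReal) * g x u + (b:EReal) * g y v) :=
        add_le_add (hf x u y v a b ha hb hab) (hg x u y v a b ha hb hab)
    _ = ((a:EReal) * f x u + (a:EReal) * g x u) + ((b:EReal) * f y v + (b:EReal) * g y v) :=
        add_add_add_comm _ _ _ _
    _ = (a:EReal) * (f x u + g x u) + (b:EReal) * (f y v + g y v) := by
        rw [bpq_distrib a ha _ _ (hfb x u) (hgb x u), bpq_distrib b hb _ _ (hfb y v) (hgb y v)]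

/-- precomposition with affine map preserves convexity -/
lemma bpq_comp_affine {n m : ℕ} (V : (Fin n → ℝ) → EReal) (hV : ERealConvexOn V)
    (A : Matrix (Fin n) (Fin n) ℝ) (B : Matrix (Fin n) (Fin m) ℝ) (c : Fin n → ℝ) :
    ERealConvexOnPair (fun x u => V (A *ᵥ x + B *ᵥ u + c)) := by
  intro x u y v a b ha hb hab
  dsimp only
  have key : A *ᵥ (a • x + b • y) + B *ᵥ (a • u + b • v) + c
      = a • (A *ᵥ x + B *ᵥ u + c) + b • (A *ᵥ y + B *ᵥ v + c) := by
    have hc : c = a • c + b • c := by rw [← add_smul, hab, one_smul]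
    rw [Matrix.mulVec_add, Matrix.mulVec_add, Matrix.mulVec_smul, Matrix.mulVec_smul,
      Matrix.mulVec_smul, Matrix.mulVec_smul]
    nth_rewrite 1 [hc]
    simp only [smul_add]
    abel
  rw [key]
  exact hV _ _ a b ha hb hab

end Helpers

section Blocks

/-- stack two vectors -/
def bpqV {p1 p2 : ℕ} (v1 : Fin p1 → ℝ) (v2 : Fin p2 → ℝ) : Fin (p1 + p2) → ℝ :=
  Fin.append v1 v2

/-- stack two matrices vertically -/
def bpqM {p1 p2 n : ℕ} (M1 : Matrix (Fin p1) (Fin n) ℝ) (M2 : Matrix (Fin p2) (Fin n) ℝ) :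
    Matrix (Fin (p1 + p2)) (Fin n) ℝ :=
  Matrix.of (Fin.append M1 M2)

lemma bpqM_mulVec {p1 p2 n : ℕ} (M1 : Matrix (Fin p1) (Fin n) ℝ)
    (M2 : Matrix (Fin p2) (Fin n) ℝ) (x : Fin n → ℝ) :
    (bpqM M1 M2) *ᵥ x = bpqV (M1 *ᵥ x) (M2 *ᵥ x) := by
  funext i
  refine Fin.addCases (fun j => ?_) (fun j => ?_) i
  · show (Fin.append M1 M2 (Fin.castAdd p2 j)) ⬝ᵥ x = Fin.append (M1 *ᵥ x) (M2 *ᵥ x) (Fin.castAdd p2 j)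
    rw [Fin.append_left]; exact congrArg (fun r => r ⬝ᵥ x) (Fin.append_left M1 M2 j)
  · show (Fin.append M1 M2 (Fin.natAdd p1 j)) ⬝ᵥ x = Fin.append (M1 *ᵥ x) (M2 *ᵥ x) (Fin.natAdd p1 j)
    rw [Fin.append_right]; exact congrArg (fun r => r ⬝ᵥ x) (Fin.append_right M1 M2 j)

lemma bpqV_add {p1 p2 : ℕ} (a c : Fin p1 → ℝ) (b d : Fin p2 → ℝ) :
    bpqV a b + bpqV c d = bpqV (a + c) (b + d) := by
  funext i
  refine Fin.addCases (fun j => ?_) (fun j => ?_) i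
  · show Fin.append a b _ + Fin.append c d _ = Fin.append (a+c) (b+d) (Fin.castAdd p2 j)
    rw [Fin.append_left, Fin.append_left, Fin.append_left]; rfl
  · show Fin.append a b _ + Fin.append c d _ = Fin.append (a+c) (b+d) (Fin.natAdd p1 j)
    rw [Fin.append_right, Fin.append_right, Fin.append_right]; rfl

lemma bpqV_eq_zero {p1 p2 : ℕ} (a : Fin p1 → ℝ) (b : Fin p2 → ℝ) :
    bpqV a b = 0 ↔ a = 0 ∧ b = 0 := by
  constructor
  · intro h
    constructor
    · funext j; have := congrFun h (Fin.castAdd p2 j)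
      rwa [bpqV, Fin.append_left] at this
    · funext j; have := congrFun h (Fin.natAdd p1 j)
      rwa [bpqV, Fin.append_right] at this
  · rintro ⟨rfl, rfl⟩
    funext i
    refine Fin.addCases (fun j => ?_) (fun j => ?_) i
    · show Fin.append (0 : Fin p1 → ℝ) (0 : Fin p2 → ℝ) (Fin.castAdd p2 j) = 0
      rw [Fin.append_left]; rfl
    · show Fin.append (0 : Fin p1 → ℝ) (0 : Fin p2 → ℝ) (Fin.natAdd p1 j) = 0
      rw [Fin.append_right]; rfl

end Blocks

section MatAlg

variable {k a b c : ℕ}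

/-- x ⬝ᵥ (Mᵀ *ᵥ w) = (M *ᵥ x) ⬝ᵥ w -/
lemma bpq_dot_t {a b : ℕ} (M : Matrix (Fin a) (Fin b) ℝ) (x : Fin b → ℝ) (w : Fin a → ℝ) :
    x ⬝ᵥ (Mᵀ *ᵥ w) = (M *ᵥ x) ⬝ᵥ w := by
  rw [dotProduct_mulVec, vecMul_transpose]

lemma bpq_dot_t' {a b : ℕ} (M : Matrix (Fin a) (Fin b) ℝ) (x : Fin b → ℝ) (w : Fin a → ℝ) :
    (Mᵀ *ᵥ w) ⬝ᵥ x = (M *ᵥ x) ⬝ᵥ w := by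
  rw [dotProduct_comm, bpq_dot_t]

/-- x ⬝ᵥ ((Mᵀ * N) *ᵥ y) = (M *ᵥ x) ⬝ᵥ (N *ᵥ y) -/
lemma bpq_dot_tmul {a b c : ℕ} (M : Matrix (Fin a) (Fin b) ℝ) (N : Matrix (Fin a) (Fin c) ℝ)
    (x : Fin b → ℝ) (y : Fin c → ℝ) :
    x ⬝ᵥ ((Mᵀ * N) *ᵥ y) = (M *ᵥ x) ⬝ᵥ (N *ᵥ y) := by
  rw [← Matrix.mulVec_mulVec, bpq_dot_t]

/-- symmetric quad-form commutes -/
lemma bpq_dot_symm {a : ℕ} (P : Matrix (Fin a) (Fin a) ℝ) (hP : P.IsSymm)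
    (y z : Fin a → ℝ) : y ⬝ᵥ (P *ᵥ z) = z ⬝ᵥ (P *ᵥ y) := by
  nth_rewrite 1 [← hP]
  rw [bpq_dot_t, dotProduct_comm]

end MatAlg

section Combine

lemma bpq_quad_combine {n m : ℕ} (PV : Matrix (Fin n) (Fin n) ℝ) (hPV : PV.IsSymm)
    (qV : Fin n → ℝ) (rV : ℝ) (A : Matrix (Fin n) (Fin n) ℝ) (B : Matrix (Fin n) (Fin m) ℝ)
    (c : Fin n → ℝ) (Pxx : Matrix (Fin n) (Fin n) ℝ) (Pxu : Matrix (Fin n) (Fin m) ℝ)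
    (Puu : Matrix (Fin m) (Fin m) ℝ) (qx : Fin n → ℝ) (qu : Fin m → ℝ) (rg : ℝ)
    (x : Fin n → ℝ) (u : Fin m → ℝ) :
    quadPart2 Pxx Pxu Puu qx qu rg x u + quadPart PV qV rV (A *ᵥ x + B *ᵥ u + c)
    = quadPart2 (Pxx + Aᵀ * (PV * A)) (Pxu + Aᵀ * (PV * B)) (Puu + Bᵀ * (PV * B))
        (qx + Aᵀ *ᵥ (PV *ᵥ c + qV)) (qu + Bᵀ *ᵥ (PV *ᵥ c + qV))
        (rg + c ⬝ᵥ (PV *ᵥ c) + 2 * (qV ⬝ᵥ c) + rV) x u := by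
  unfold quadPart quadPart2
  simp only [Matrix.add_mulVec, Matrix.mulVec_add, ← Matrix.mulVec_mulVec,
    dotProduct_add, add_dotProduct, bpq_dot_t, bpq_dot_t']
  rw [bpq_dot_symm PV hPV (B *ᵥ u) (A *ᵥ x), bpq_dot_symm PV hPV c (A *ᵥ x),
    bpq_dot_symm PV hPV c (B *ᵥ u)]
  rw [dotProduct_comm qV (A *ᵥ x), dotProduct_comm qV (B *ᵥ u), dotProduct_comm qV c]
  rw [dotProduct_comm qx x, dotProduct_comm qu u]
  ring

end Combine

lemma bpq_ext_combine {n m pv pg : ℕ} (PV : Matrix (Fin n) (Fin n) ℝ) (hPV : PV.IsSymm)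
    (qV : Fin n → ℝ) (rV : ℝ) (FV : Matrix (Fin pv) (Fin n) ℝ) (gV : Fin pv → ℝ)
    (A : Matrix (Fin n) (Fin n) ℝ) (B : Matrix (Fin n) (Fin m) ℝ) (c : Fin n → ℝ)
    (Pxx : Matrix (Fin n) (Fin n) ℝ) (Pxu : Matrix (Fin n) (Fin m) ℝ)
    (Puu : Matrix (Fin m) (Fin m) ℝ) (qx : Fin n → ℝ) (qu : Fin m → ℝ) (rg : ℝ)
    (Fx : Matrix (Fin pg) (Fin n) ℝ) (Fu : Matrix (Fin pg) (Fin m) ℝ) (gg : Fin pg → ℝ)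
    (x : Fin n → ℝ) (u : Fin m → ℝ) :
    extQuad2 Pxx Pxu Puu qx qu rg Fx Fu gg x u
      + extQuad PV qV rV FV gV (A *ᵥ x + B *ᵥ u + c)
    = extQuad2 (Pxx + Aᵀ * (PV * A)) (Pxu + Aᵀ * (PV * B)) (Puu + Bᵀ * (PV * B))
        (qx + Aᵀ *ᵥ (PV *ᵥ c + qV)) (qu + Bᵀ *ᵥ (PV *ᵥ c + qV))
        (rg + c ⬝ᵥ (PV *ᵥ c) + 2 * (qV ⬝ᵥ c) + rV)
        (bpqM Fx (FV * A)) (bpqM Fu (FV * B)) (bpqV gg (FV *ᵥ c + gV)) x u := by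
  have hcond : (bpqM Fx (FV * A)) *ᵥ x + (bpqM Fu (FV * B)) *ᵥ u + bpqV gg (FV *ᵥ c + gV)
      = bpqV (Fx *ᵥ x + Fu *ᵥ u + gg) (FV *ᵥ (A *ᵥ x + B *ᵥ u + c) + gV) := by
    rw [bpqM_mulVec, bpqM_mulVec, bpqV_add, bpqV_add]
    congr 1
    rw [Matrix.mulVec_add, Matrix.mulVec_add, ← Matrix.mulVec_mulVec, ← Matrix.mulVec_mulVec]
    abel
  unfold extQuad2 extQuad
  rw [hcond]
  by_cases h1 : Fx *ᵥ x + Fu *ᵥ u + gg = 0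
  · by_cases h2 : FV *ᵥ (A *ᵥ x + B *ᵥ u + c) + gV = 0
    · rw [if_pos h1, if_pos h2, if_pos (by rw [(bpqV_eq_zero _ _)]; exact ⟨h1, h2⟩),
        ← EReal.coe_add, bpq_quad_combine PV hPV]
    · rw [if_pos h1, if_neg h2, if_neg (by rw [(bpqV_eq_zero _ _)]; tauto),
        EReal.add_top_of_ne_bot (EReal.coe_ne_bot _)]
  · rw [if_neg h1,
      if_neg (show ¬ bpqV (Fx *ᵥ x + Fu *ᵥ u + gg) (FV *ᵥ (A *ᵥ x + B *ᵥ u + c) + gV) = 0 by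
        rw [(bpqV_eq_zero _ _)]; tauto),
      EReal.top_add_of_ne_bot]
    split <;> simp

section PSD

lemma bpq_psd {n pv : ℕ} (PV : Matrix (Fin n) (Fin n) ℝ) (qV : Fin n → ℝ) (rV : ℝ)
    (FV : Matrix (Fin pv) (Fin n) ℝ) (gV : Fin pv → ℝ)
    (hV : ERealConvexOn (extQuad PV qV rV FV gV))
    (z0 : Fin n → ℝ) (hz0 : FV *ᵥ z0 + gV = 0)
    (w : Fin n → ℝ) (hw : FV *ᵥ w = 0) : 0 ≤ w ⬝ᵥ (PV *ᵥ w) := by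
  have h := hV (z0 + w) (z0 - w) (1/2) (1/2) (by norm_num) (by norm_num) (by norm_num)
  have hmid : (1/2 : ℝ) • (z0 + w) + (1/2 : ℝ) • (z0 - w) = z0 := by
    funext i; simp [Pi.smul_apply]; ring
  have hc1 : FV *ᵥ (z0 + w) + gV = 0 := by
    rw [Matrix.mulVec_add, hw, add_zero, hz0]
  have hc2 : FV *ᵥ (z0 - w) + gV = 0 := by
    rw [Matrix.mulVec_sub, hw, sub_zero, hz0]
  rw [hmid] at h
  unfold extQuad at h
  rw [if_pos hz0, if_pos hc1, if_pos hc2, ← EReal.coe_mul, ← EReal.coe_mul,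
    ← EReal.coe_add, EReal.coe_le_coe_iff] at h
  unfold quadPart at h
  have hexp1 : (z0 + w) ⬝ᵥ PV *ᵥ (z0 + w)
      = z0 ⬝ᵥ PV *ᵥ z0 + z0 ⬝ᵥ PV *ᵥ w + w ⬝ᵥ PV *ᵥ z0 + w ⬝ᵥ PV *ᵥ w := by
    rw [Matrix.mulVec_add, dotProduct_add, add_dotProduct, add_dotProduct]; ring
  have hexp2 : (z0 - w) ⬝ᵥ PV *ᵥ (z0 - w)
      = z0 ⬝ᵥ PV *ᵥ z0 - z0 ⬝ᵥ PV *ᵥ w - w ⬝ᵥ PV *ᵥ z0 + w ⬝ᵥ PV *ᵥ w := by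
    rw [Matrix.mulVec_sub, dotProduct_sub, sub_dotProduct, sub_dotProduct]; ring
  have hl1 : qV ⬝ᵥ (z0 + w) = qV ⬝ᵥ z0 + qV ⬝ᵥ w := dotProduct_add _ _ _
  have hl2 : qV ⬝ᵥ (z0 - w) = qV ⬝ᵥ z0 - qV ⬝ᵥ w := dotProduct_sub _ _ _
  rw [hexp1, hexp2, hl1, hl2] at h
  nlinarith [h]

end PSD

section Subst

lemma bpq_subst {n m : ℕ} (Pxx : Matrix (Fin n) (Fin n) ℝ) (Pxu : Matrix (Fin n) (Fin m) ℝ)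
    (Puu : Matrix (Fin m) (Fin m) ℝ) (hPuu : Puu.IsSymm)
    (qx : Fin n → ℝ) (qu : Fin m → ℝ) (r : ℝ)
    (L : Matrix (Fin m) (Fin n) ℝ) (d : Fin m → ℝ) (x : Fin n → ℝ) :
    quadPart2 Pxx Pxu Puu qx qu r x (L *ᵥ x + d)
    = quadPart (Pxx + Pxu * L + (Pxu * L)ᵀ + Lᵀ * (Puu * L))
        (Pxu *ᵥ d + Lᵀ *ᵥ (Puu *ᵥ d) + qx + Lᵀ *ᵥ qu)
        (d ⬝ᵥ (Puu *ᵥ d) + 2 * (qu ⬝ᵥ d) + r) x := by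
  unfold quadPart quadPart2
  simp only [Matrix.add_mulVec, Matrix.mulVec_add, ← Matrix.mulVec_mulVec,
    dotProduct_add, add_dotProduct, bpq_dot_t, bpq_dot_t', Matrix.transpose_mul]
  rw [bpq_dot_symm Puu hPuu d (L *ᵥ x), dotProduct_comm (Pxu *ᵥ (L *ᵥ x)) x,
    dotProduct_comm (Pxu *ᵥ d) x, dotProduct_comm (L *ᵥ x) qu]
  ring

lemma bpq_subst_symm {n m : ℕ} (Pxx : Matrix (Fin n) (Fin n) ℝ) (hPxx : Pxx.IsSymm)
    (Pxu : Matrix (Fin n) (Fin m) ℝ) (Puu : Matrix (Fin m) (Fin m) ℝ) (hPuu : Puu.IsSymm)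
    (L : Matrix (Fin m) (Fin n) ℝ) :
    (Pxx + Pxu * L + (Pxu * L)ᵀ + Lᵀ * (Puu * L)).IsSymm := by
  unfold Matrix.IsSymm at *
  simp only [Matrix.transpose_add, Matrix.transpose_mul, Matrix.transpose_transpose,
    hPxx, hPuu, Matrix.mul_assoc]
  abel

end Subst

section Dom

lemma bpq_toMatrix_mulVec {a b : ℕ} (f : (Fin a → ℝ) →ₗ[ℝ] (Fin b → ℝ)) (x : Fin a → ℝ) :
    (LinearMap.toMatrix' f) *ᵥ x = f x := by
  rw [← Matrix.toLin'_apply, Matrix.toLin'_toMatrix']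

lemma bpq_dom {p m : ℕ} (Fu : Matrix (Fin p) (Fin m) ℝ) :
    ∃ Pi : Matrix (Fin p) (Fin p) ℝ,
      ∀ y : Fin p → ℝ, (Pi *ᵥ y = 0 ↔ y ∈ LinearMap.range Fu.mulVecLin) := by
  set R := LinearMap.range Fu.mulVecLin with hR
  obtain ⟨R', hR'⟩ := Submodule.exists_isCompl R
  set f : (Fin p → ℝ) →ₗ[ℝ] (Fin p → ℝ) :=
    R'.subtype ∘ₗ (Submodule.projectionOnto R' R hR'.symm) with hf
  refine ⟨LinearMap.toMatrix' f, fun y => ?_⟩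
  rw [bpq_toMatrix_mulVec]
  have : f y = 0 ↔ (Submodule.projectionOnto R' R hR'.symm) y = 0 := by
    rw [hf]; simp [Submodule.coe_eq_zero]
  rw [this, Submodule.projectionOnto_apply_eq_zero_iff]

end Dom

section Min

lemma bpq_solve {α : Type*} [AddCommGroup α] (a b c : α) (h : a + b + c = 0) : b = -(a + c) := by
  have h2 : b + (a + c) = 0 := by rw [← h]; abel
  exact add_eq_zero_iff_eq_neg.mp h2

set_option maxHeartbeats 2000000 in
lemma bpq_min {m p n : ℕ} (P : Matrix (Fin m) (Fin m) ℝ) (hP : P.IsSymm)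
    (Fu : Matrix (Fin p) (Fin m) ℝ)
    (hpos : ∀ v, Fu *ᵥ v = 0 → v ≠ 0 → 0 < v ⬝ᵥ (P *ᵥ v))
    (C : Matrix (Fin n) (Fin m) ℝ) (qu : Fin m → ℝ)
    (Fx : Matrix (Fin p) (Fin n) ℝ) (g : Fin p → ℝ) :
    ∃ (L : Matrix (Fin m) (Fin n) ℝ) (d : Fin m → ℝ), ∀ x : Fin n → ℝ,
      (∃ u, Fx *ᵥ x + Fu *ᵥ u + g = 0) →
      (Fx *ᵥ x + Fu *ᵥ (L *ᵥ x + d) + g = 0) ∧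
      ∀ u, Fx *ᵥ x + Fu *ᵥ u + g = 0 →
        (L *ᵥ x + d) ⬝ᵥ (P *ᵥ (L *ᵥ x + d)) / 2 + x ⬝ᵥ (C *ᵥ (L *ᵥ x + d)) + qu ⬝ᵥ (L *ᵥ x + d)
          ≤ u ⬝ᵥ (P *ᵥ u) / 2 + x ⬝ᵥ (C *ᵥ u) + qu ⬝ᵥ u := by
  classical
  set K : Submodule ℝ (Fin m → ℝ) := LinearMap.ker Fu.mulVecLin with hK
  have hpsd : ∀ v : Fin m → ℝ, Fu *ᵥ v = 0 → 0 ≤ v ⬝ᵥ (P *ᵥ v) := by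
    intro v hv
    by_cases h : v = 0
    · subst h; simp
    · exact le_of_lt (hpos v hv h)
  set R : Submodule ℝ (Fin p → ℝ) := LinearMap.range Fu.mulVecLin with hRdef
  obtain ⟨σ, hσ⟩ := LinearMap.exists_rightInverse_of_surjective
      (Fu.mulVecLin.rangeRestrict) (LinearMap.range_rangeRestrict _)
  obtain ⟨R', hR'⟩ := Submodule.exists_isCompl R
  set Msec : (Fin p → ℝ) →ₗ[ℝ] (Fin m → ℝ) :=
    σ ∘ₗ (Submodule.linearProjOfIsCompl R R' hR') with hMsec_def
  have hMsec : ∀ y, y ∈ R → Fu *ᵥ (Msec y) = y := by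
    intro y hy
    have h1 : (Submodule.linearProjOfIsCompl R R' hR') y = ⟨y, hy⟩ :=
      Submodule.linearProjOfIsCompl_apply_left hR' ⟨y, hy⟩
    have h2 : Fu.mulVecLin.rangeRestrict (σ ⟨y, hy⟩) = ⟨y, hy⟩ := by
      rw [← LinearMap.comp_apply, hσ]; rfl
    have h3 := congrArg (Subtype.val (p := fun z => z ∈ R)) h2
    simp only [LinearMap.codRestrict_apply, LinearMap.rangeRestrict] at h3
    show Fu *ᵥ (σ ((Submodule.linearProjOfIsCompl R R' hR') y)) = y
    rw [h1, ← Matrix.mulVecLin_apply]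
    exact h3
  -- dual pairing
  set dotL : (Fin m → ℝ) →ₗ[ℝ] Module.Dual ℝ (Fin m → ℝ) :=
    LinearMap.mk₂ ℝ (fun z w => w ⬝ᵥ z)
      (fun z1 z2 w => dotProduct_add w z1 z2)
      (fun c z w => dotProduct_smul c w z)
      (fun z w1 w2 => add_dotProduct w1 w2 z)
      (fun c z w => smul_dotProduct c w z) with hdotL
  set Phi : K →ₗ[ℝ] Module.Dual ℝ K :=
    K.subtype.dualMap ∘ₗ dotL ∘ₗ P.mulVecLin ∘ₗ K.subtype with hPhi
  have hPhi_apply : ∀ v w : K, Phi v w = (w : Fin m → ℝ) ⬝ᵥ (P *ᵥ (v : Fin m → ℝ)) := by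
    intro v w; rfl
  have hmemK : ∀ v : Fin m → ℝ, v ∈ K ↔ Fu *ᵥ v = 0 := by
    intro v; rw [hK, LinearMap.mem_ker, Matrix.mulVecLin_apply]
  have hker : ∀ v : K, Phi v = 0 → v = 0 := by
    intro v hv
    by_contra hvne
    have h0 : Phi v v = 0 := by rw [hv]; rfl
    rw [hPhi_apply] at h0
    have hvK : Fu *ᵥ (v : Fin m → ℝ) = 0 := (hmemK _).mp v.2
    have hv0 : (v : Fin m → ℝ) ≠ 0 := fun h => hvne (Subtype.ext h)
    have := hpos v hvK hv0
    linarith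
  have hinj : Function.Injective Phi := by
    apply LinearMap.ker_eq_bot.mp
    apply (Submodule.eq_bot_iff _).mpr
    intro v hv; exact hker v (LinearMap.mem_ker.mp hv)
  have hsurj : Function.Surjective Phi := by
    have hfr : Module.finrank ℝ K = Module.finrank ℝ (Module.Dual ℝ K) :=
      (Subspace.dual_finrank_eq).symm
    exact (LinearMap.injective_iff_surjective_of_finrank_eq_finrank hfr).mp hinj
  set ePhi : K ≃ₗ[ℝ] Module.Dual ℝ K := LinearEquiv.ofBijective Phi ⟨hinj, hsurj⟩ with hePhi
  set vstar : (Fin m → ℝ) →ₗ[ℝ] K :=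
    ePhi.symm.toLinearMap ∘ₗ (-(K.subtype.dualMap ∘ₗ dotL)) with hvstar
  have hvstar_prop : ∀ (ℓ : Fin m → ℝ) (w : K),
      (w : Fin m → ℝ) ⬝ᵥ (P *ᵥ ((vstar ℓ : K) : Fin m → ℝ)) + (w : Fin m → ℝ) ⬝ᵥ ℓ = 0 := by
    intro ℓ w
    have h1 : Phi (vstar ℓ) = -(K.subtype.dualMap (dotL ℓ)) := by
      rw [hvstar]
      show Phi (ePhi.symm ((-(K.subtype.dualMap ∘ₗ dotL)) ℓ)) = _
      have : ∀ φ, Phi (ePhi.symm φ) = φ := fun φ => ePhi.apply_symm_apply φ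
      rw [this]
      rfl
    have happ : Phi (vstar ℓ) w = -((K.subtype.dualMap (dotL ℓ)) w) := by
      rw [h1]; rfl
    have hL : Phi (vstar ℓ) w = (w : Fin m → ℝ) ⬝ᵥ (P *ᵥ ((vstar ℓ : K) : Fin m → ℝ)) :=
      hPhi_apply _ _
    have hR2 : (K.subtype.dualMap (dotL ℓ)) w = (w : Fin m → ℝ) ⬝ᵥ ℓ := rfl
    rw [hL, hR2] at happ
    linarith [happ]
  have hKerV : ∀ ℓ, Fu *ᵥ ((vstar ℓ : K) : Fin m → ℝ) = 0 := fun ℓ => (hmemK _).mp (vstar ℓ).2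
  -- affine pieces
  set u0lin : (Fin n → ℝ) →ₗ[ℝ] (Fin m → ℝ) := Msec ∘ₗ (-Fx.mulVecLin) with hu0lin
  set u0c : Fin m → ℝ := Msec (-g) with hu0c
  set lmap : (Fin n → ℝ) →ₗ[ℝ] (Fin m → ℝ) :=
    P.mulVecLin ∘ₗ u0lin + (Cᵀ).mulVecLin with hlmap
  set lc : Fin m → ℝ := P *ᵥ u0c + qu with hlc
  set Lam : (Fin n → ℝ) →ₗ[ℝ] (Fin m → ℝ) :=
    u0lin + K.subtype ∘ₗ vstar ∘ₗ lmap with hLam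
  clear_value dotL Phi ePhi vstar Msec u0lin u0c lmap lc Lam
  refine ⟨LinearMap.toMatrix' Lam, u0c + ((vstar lc : K) : Fin m → ℝ), ?_⟩
  intro x hx
  obtain ⟨u1, hu1⟩ := hx
  have hLx : (LinearMap.toMatrix' Lam) *ᵥ x = Lam x := bpq_toMatrix_mulVec _ _
  set u0x : Fin m → ℝ := u0lin x + u0c with hu0x
  set ℓx : Fin m → ℝ := P *ᵥ u0x + Cᵀ *ᵥ x + qu with hℓx
  set ux : Fin m → ℝ := (LinearMap.toMatrix' Lam) *ᵥ x + (u0c + ((vstar lc : K) : Fin m → ℝ))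
    with hux
  clear_value u0x ℓx ux
  have hux_eq : ux = u0x + ((vstar ℓx : K) : Fin m → ℝ) := by
    have hl : lmap x + lc = ℓx := by
      rw [hℓx, hlc, hu0x]
      have h1 : lmap x = P *ᵥ (u0lin x) + Cᵀ *ᵥ x := by rw [hlmap]; rfl
      rw [h1, Matrix.mulVec_add]
      abel
    have hLamx : Lam x = u0lin x + ((vstar (lmap x) : K) : Fin m → ℝ) := by rw [hLam]; rfl
    have h2 : (vstar ℓx : K) = vstar (lmap x) + vstar lc := by rw [← hl, map_add]
    rw [hux, hLx, hLamx, hu0x, h2, Submodule.coe_add]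
    abel
  have hyR : -(Fx *ᵥ x + g) ∈ R := by
    refine ⟨u1, ?_⟩
    rw [Matrix.mulVecLin_apply]
    exact bpq_solve _ _ _ hu1
  have hu0xF : Fu *ᵥ u0x = -(Fx *ᵥ x + g) := by
    have hsum : u0x = Msec (-(Fx *ᵥ x + g)) := by
      rw [hu0x, hu0lin, hu0c]
      simp only [LinearMap.comp_apply, LinearMap.neg_apply, Matrix.mulVecLin_apply]
      rw [show -(Fx *ᵥ x + g) = -(Fx *ᵥ x) + -g by abel, map_add]
    rw [hsum]
    exact hMsec _ hyR
  have hfeas : Fx *ᵥ x + Fu *ᵥ ux + g = 0 := by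
    rw [hux_eq, Matrix.mulVec_add, hu0xF, hKerV]
    abel
  refine ⟨hfeas, ?_⟩
  intro u hu
  set w : Fin m → ℝ := u - ux with hw
  have hwK : Fu *ᵥ w = 0 := by
    rw [hw, Matrix.mulVec_sub]
    rw [bpq_solve _ _ _ hu, bpq_solve _ _ _ hfeas]
    abel
  have hwmem : w ∈ K := (hmemK _).mpr hwK
  have hstat : w ⬝ᵥ (P *ᵥ ux) + w ⬝ᵥ (Cᵀ *ᵥ x) + w ⬝ᵥ qu = 0 := by
    have hvp : w ⬝ᵥ (P *ᵥ ((vstar ℓx : K) : Fin m → ℝ)) + w ⬝ᵥ ℓx = 0 :=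
      hvstar_prop ℓx ⟨w, hwmem⟩
    have hsplit : w ⬝ᵥ (P *ᵥ ux)
        = w ⬝ᵥ (P *ᵥ ((vstar ℓx : K) : Fin m → ℝ)) + w ⬝ᵥ (P *ᵥ u0x) := by
      rw [hux_eq, Matrix.mulVec_add, dotProduct_add]
      ring
    have hlxdot : w ⬝ᵥ ℓx = w ⬝ᵥ (P *ᵥ u0x) + w ⬝ᵥ (Cᵀ *ᵥ x) + w ⬝ᵥ qu := by
      rw [hℓx, dotProduct_add, dotProduct_add]
    rw [hlxdot] at hvp
    rw [hsplit]
    linarith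
  have hu_eq : u = ux + w := by rw [hw]; abel
  have hpsdw : 0 ≤ w ⬝ᵥ (P *ᵥ w) := hpsd w hwK
  rw [hu_eq]
  have hq1 : (ux + w) ⬝ᵥ (P *ᵥ (ux + w))
      = ux ⬝ᵥ (P *ᵥ ux) + 2 * (w ⬝ᵥ (P *ᵥ ux)) + w ⬝ᵥ (P *ᵥ w) := by
    rw [Matrix.mulVec_add, dotProduct_add, add_dotProduct, add_dotProduct,
      bpq_dot_symm P hP ux w]
    ring
  have hq2 : x ⬝ᵥ (C *ᵥ (ux + w)) = x ⬝ᵥ (C *ᵥ ux) + w ⬝ᵥ (Cᵀ *ᵥ x) := by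
    rw [Matrix.mulVec_add, dotProduct_add]
    rw [bpq_dot_t C w x, dotProduct_comm x (C *ᵥ w)]
  have hq3 : qu ⬝ᵥ (ux + w) = qu ⬝ᵥ ux + w ⬝ᵥ qu := by
    rw [dotProduct_add, dotProduct_comm qu w]
  rw [hq1, hq2, hq3]
  linarith

end Min

section MainHelpers

lemma bpq_mul_ne_bot (b : ℝ) (hb : 0 ≤ b) (q : EReal) (hq : q ≠ ⊥) : (b : EReal) * q ≠ ⊥ := by
  induction q with
  | bot => exact absurd rfl hq
  | top =>
    rcases eq_or_lt_of_le hb with h0 | h0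
    · rw [← h0]; simp
    · rw [EReal.coe_mul_top_of_pos h0]; simp
  | coe s => rw [← EReal.coe_mul]; exact EReal.coe_ne_bot _

lemma bpq_top_convex (a b : ℝ) (ha : 0 ≤ a) (hb : 0 ≤ b) (hab : a + b = 1) :
    (a : EReal) * ⊤ + (b : EReal) * ⊤ = ⊤ := by
  rcases eq_or_lt_of_le ha with h0 | h0
  · have hb1 : b = 1 := by linarith
    rw [← h0, hb1]; simp
  · rw [EReal.coe_mul_top_of_pos h0, EReal.top_add_of_ne_bot (bpq_mul_ne_bot b hb ⊤ (by simp))]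

lemma bpq_symm_conj {n k : ℕ} (S : Matrix (Fin k) (Fin k) ℝ) (hS : S.IsSymm)
    (M : Matrix (Fin k) (Fin n) ℝ) : (Mᵀ * (S * M)).IsSymm := by
  unfold Matrix.IsSymm at *
  rw [Matrix.transpose_mul, Matrix.transpose_mul, Matrix.transpose_transpose, hS,
    Matrix.mul_assoc]

end MainHelpers

set_option maxHeartbeats 1000000 in
/-- the (deterministic) Bellman operator preserves extended quadraticity:
if `V` is a convex extended quadratic, the dynamics are affine `f(x,u) = Ax + Bu + c`,
and the stage cost is a convex extended quadratic in `(x,u)` that is strictly convex in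
`u`, then `Q(x,u) = g(x,u) + V(Ax + Bu + c)` is a convex extended quadratic in `(x,u)`;
and provided `inf_u Q(x,u) > −∞` for all `x`, the partial minimum `x ↦ inf_u Q(x,u)` is a
convex extended quadratic function of `x`. -/
theorem bellman_preserves_extQuad {n m pv pg : ℕ}
    (PV : Matrix (Fin n) (Fin n) ℝ) (hPV : PV.IsSymm) (qV : Fin n → ℝ) (rV : ℝ)
    (FV : Matrix (Fin pv) (Fin n) ℝ) (gV : Fin pv → ℝ)
    (hVconv : ERealConvexOn (extQuad PV qV rV FV gV))
    (A : Matrix (Fin n) (Fin n) ℝ) (B : Matrix (Fin n) (Fin m) ℝ) (c : Fin n → ℝ)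
    (Pxx : Matrix (Fin n) (Fin n) ℝ) (hPxx : Pxx.IsSymm)
    (Pxu : Matrix (Fin n) (Fin m) ℝ)
    (Puu : Matrix (Fin m) (Fin m) ℝ) (hPuu : Puu.IsSymm)
    (qx : Fin n → ℝ) (qu : Fin m → ℝ) (rg : ℝ)
    (Fx : Matrix (Fin pg) (Fin n) ℝ) (Fu : Matrix (Fin pg) (Fin m) ℝ) (gg : Fin pg → ℝ)
    (hgconv : ERealConvexOnPair (extQuad2 Pxx Pxu Puu qx qu rg Fx Fu gg))
    (hgstrict : ∀ v : Fin m → ℝ, Fu.mulVec v = 0 → v ≠ 0 → 0 < v ⬝ᵥ Puu.mulVec v) :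
    (IsExtQuadPair (fun x u => extQuad2 Pxx Pxu Puu qx qu rg Fx Fu gg x u +
        extQuad PV qV rV FV gV (A.mulVec x + B.mulVec u + c)) ∧
      ERealConvexOnPair (fun x u => extQuad2 Pxx Pxu Puu qx qu rg Fx Fu gg x u +
        extQuad PV qV rV FV gV (A.mulVec x + B.mulVec u + c))) ∧
    ((∀ x, (⨅ u, extQuad2 Pxx Pxu Puu qx qu rg Fx Fu gg x u +
          extQuad PV qV rV FV gV (A.mulVec x + B.mulVec u + c)) ≠ ⊥) →
      IsExtQuadFun (fun x => ⨅ u, extQuad2 Pxx Pxu Puu qx qu rg Fx Fu gg x u +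
          extQuad PV qV rV FV gV (A.mulVec x + B.mulVec u + c)) ∧
      ERealConvexOn (fun x => ⨅ u, extQuad2 Pxx Pxu Puu qx qu rg Fx Fu gg x u +
          extQuad PV qV rV FV gV (A.mulVec x + B.mulVec u + c))) := by
  have hEq := bpq_ext_combine PV hPV qV rV FV gV A B c Pxx Pxu Puu qx qu rg Fx Fu gg
  set P2xx := Pxx + Aᵀ * (PV * A) with hP2xxdef
  set P2xu := Pxu + Aᵀ * (PV * B) with hP2xudef
  set P2uu := Puu + Bᵀ * (PV * B) with hP2uudef
  set q2x := qx + Aᵀ *ᵥ (PV *ᵥ c + qV) with hq2xdef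
  set q2u := qu + Bᵀ *ᵥ (PV *ᵥ c + qV) with hq2udef
  set r2 := rg + c ⬝ᵥ (PV *ᵥ c) + 2 * (qV ⬝ᵥ c) + rV with hr2def
  set F2x := bpqM Fx (FV * A) with hF2xdef
  set F2u := bpqM Fu (FV * B) with hF2udef
  set g2 := bpqV gg (FV *ᵥ c + gV) with hg2def
  have hsymxx : P2xx.IsSymm := Matrix.IsSymm.add hPxx (bpq_symm_conj PV hPV A)
  have hsymuu : P2uu.IsSymm := Matrix.IsSymm.add hPuu (bpq_symm_conj PV hPV B)
  -- part 1b : convexity of the sum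
  have hconv : ERealConvexOnPair (fun x u => extQuad2 Pxx Pxu Puu qx qu rg Fx Fu gg x u +
      extQuad PV qV rV FV gV (A.mulVec x + B.mulVec u + c)) :=
    bpq_add_convex_pair _ _ hgconv (bpq_comp_affine _ hVconv A B c)
      (fun x u => bpq_extQuad2_ne_bot _ _ _ _ _ _ _ _ _ _ _)
      (fun x u => bpq_extQuad_ne_bot _ _ _ _ _ _)
  refine ⟨⟨⟨pg + pv, P2xx, P2xu, P2uu, q2x, q2u, r2, F2x, F2u, g2, hsymxx, hsymuu, hEq⟩,
    hconv⟩, ?_⟩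
  intro _hbot
  have hSx : ∀ x, (⨅ u, extQuad2 Pxx Pxu Puu qx qu rg Fx Fu gg x u +
      extQuad PV qV rV FV gV (A.mulVec x + B.mulVec u + c))
      = ⨅ u, extQuad2 P2xx P2xu P2uu q2x q2u r2 F2x F2u g2 x u :=
    fun x => iInf_congr (fun u => hEq x u)
  by_cases hfeas : ∃ x u, F2x *ᵥ x + F2u *ᵥ u + g2 = 0
  case neg =>
    -- everything is ⊤
    have hTop : ∀ x, (⨅ u, extQuad2 P2xx P2xu P2uu q2x q2u r2 F2x F2u g2 x u) = ⊤ := by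
      intro x
      refine iInf_eq_top.mpr (fun u => ?_)
      unfold extQuad2
      rw [if_neg (fun h => hfeas ⟨x, u, h⟩)]
    have hTop' : ∀ x, (⨅ u, extQuad2 Pxx Pxu Puu qx qu rg Fx Fu gg x u +
        extQuad PV qV rV FV gV (A.mulVec x + B.mulVec u + c)) = ⊤ :=
      fun x => (hSx x).trans (hTop x)
    constructor
    · refine ⟨1, 0, 0, 0, 0, (fun _ => 1), Matrix.isSymm_zero, fun x => ?_⟩
      dsimp only
      rw [hTop' x]
      unfold extQuad
      rw [if_neg]
      intro h
      have := congrFun h 0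
      simp [Matrix.zero_mulVec] at this
    · intro x y a b ha hb hab
      dsimp only
      rw [hTop', hTop', hTop', bpq_top_convex a b ha hb hab]
  case pos =>
    obtain ⟨x0, u0, hfeas0⟩ := hfeas
    -- V domain nonempty
    have hz0 : FV *ᵥ (A *ᵥ x0 + B *ᵥ u0 + c) + gV = 0 := by
      have h := hfeas0
      rw [hF2xdef, hF2udef, hg2def, bpqM_mulVec, bpqM_mulVec, bpqV_add, bpqV_add] at h
      have h2 := (bpqV_eq_zero _ _).mp h
      have h3 := h2.2
      rw [← Matrix.mulVec_mulVec, ← Matrix.mulVec_mulVec] at h3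
      rw [Matrix.mulVec_add, Matrix.mulVec_add]
      rw [show FV *ᵥ (A *ᵥ x0) + FV *ᵥ (B *ᵥ u0) + FV *ᵥ c + gV
        = FV *ᵥ (A *ᵥ x0) + FV *ᵥ (B *ᵥ u0) + (FV *ᵥ c + gV) from by abel]
      exact h3
    -- strict positivity of P2uu on ker F2u
    have hpos2 : ∀ v, F2u *ᵥ v = 0 → v ≠ 0 → 0 < v ⬝ᵥ (P2uu *ᵥ v) := by
      intro v hv hv0
      rw [hF2udef, bpqM_mulVec] at hv
      obtain ⟨hv1, hv2⟩ := (bpqV_eq_zero _ _).mp hv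
      have hBv : FV *ᵥ (B *ᵥ v) = 0 := by
        rw [Matrix.mulVec_mulVec]; exact hv2
      have hpsdB : 0 ≤ (B *ᵥ v) ⬝ᵥ (PV *ᵥ (B *ᵥ v)) :=
        bpq_psd PV qV rV FV gV hVconv _ hz0 _ hBv
      have hsplit : v ⬝ᵥ (P2uu *ᵥ v)
          = v ⬝ᵥ (Puu *ᵥ v) + (B *ᵥ v) ⬝ᵥ (PV *ᵥ (B *ᵥ v)) := by
        rw [hP2uudef, Matrix.add_mulVec, dotProduct_add, bpq_dot_tmul, ← Matrix.mulVec_mulVec]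
      rw [hsplit]
      have := hgstrict v hv1 hv0
      linarith
    obtain ⟨L, d, hLd⟩ := bpq_min P2uu hsymuu F2u hpos2 P2xu q2u F2x g2
    obtain ⟨Pi, hPi⟩ := bpq_dom F2u
    -- domain characterization
    have hdomiff : ∀ x, (∃ u, F2x *ᵥ x + F2u *ᵥ u + g2 = 0) ↔
        (Pi * F2x) *ᵥ x + Pi *ᵥ g2 = 0 := by
      intro x
      have hPiSum : (Pi * F2x) *ᵥ x + Pi *ᵥ g2 = Pi *ᵥ (F2x *ᵥ x + g2) := by
        rw [Matrix.mulVec_add, Matrix.mulVec_mulVec]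
      constructor
      · rintro ⟨u, hu⟩
        have hmem : -(F2x *ᵥ x + g2) ∈ LinearMap.range F2u.mulVecLin :=
          ⟨u, by rw [Matrix.mulVecLin_apply]; exact bpq_solve _ _ _ hu⟩
        have hmem2 : (F2x *ᵥ x + g2) ∈ LinearMap.range F2u.mulVecLin := by
          have := Submodule.neg_mem _ hmem
          rwa [neg_neg] at this
        rw [hPiSum]
        exact (hPi _).mpr hmem2
      · intro h
        rw [hPiSum] at h
        obtain ⟨u, hu⟩ := (hPi _).mp h
        rw [Matrix.mulVecLin_apply] at hu
        refine ⟨-u, ?_⟩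
        rw [Matrix.mulVec_neg, hu]
        abel
    -- attainment
    have hattain : ∀ x, (∃ u, F2x *ᵥ x + F2u *ᵥ u + g2 = 0) →
        (⨅ u, extQuad2 P2xx P2xu P2uu q2x q2u r2 F2x F2u g2 x u)
        = extQuad2 P2xx P2xu P2uu q2x q2u r2 F2x F2u g2 x (L *ᵥ x + d) := by
      intro x hx
      obtain ⟨hfeasx, hopt⟩ := hLd x hx
      apply le_antisymm
      · exact iInf_le _ _
      · refine le_iInf (fun u => ?_)
        unfold extQuad2
        rw [if_pos hfeasx]
        split
        · rename_i hu
          apply EReal.coe_le_coe_iff.mpr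
          have hineq := hopt u hu
          unfold quadPart2
          nlinarith [hineq]
        · exact le_top
    -- value function form
    set Pd := P2xx + P2xu * L + (P2xu * L)ᵀ + Lᵀ * (P2uu * L) with hPd
    set qd := P2xu *ᵥ d + Lᵀ *ᵥ (P2uu *ᵥ d) + q2x + Lᵀ *ᵥ q2u with hqd
    set rd := d ⬝ᵥ (P2uu *ᵥ d) + 2 * (q2u ⬝ᵥ d) + r2 with hrd
    have hSval : ∀ x, (⨅ u, extQuad2 P2xx P2xu P2uu q2x q2u r2 F2x F2u g2 x u)
        = extQuad Pd qd rd (Pi * F2x) (Pi *ᵥ g2) x := by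
      intro x
      by_cases hx : ∃ u, F2x *ᵥ x + F2u *ᵥ u + g2 = 0
      · rw [hattain x hx]
        unfold extQuad extQuad2
        rw [if_pos ((hLd x hx).1), if_pos ((hdomiff x).mp hx),
          bpq_subst P2xx P2xu P2uu hsymuu q2x q2u r2 L d x]
      · have hL : (⨅ u, extQuad2 P2xx P2xu P2uu q2x q2u r2 F2x F2u g2 x u) = ⊤ := by
          refine iInf_eq_top.mpr (fun u => ?_)
          unfold extQuad2
          rw [if_neg (fun h => hx ⟨u, h⟩)]
        rw [hL]
        unfold extQuad
        rw [if_neg (fun h => hx ((hdomiff x).mpr h))]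
    constructor
    · exact ⟨pg + pv, Pd, qd, rd, Pi * F2x, Pi *ᵥ g2,
        bpq_subst_symm P2xx hsymxx P2xu P2uu hsymuu L,
        fun x => (hSx x).trans (hSval x)⟩
    · -- convexity of the value function
      intro x y a b ha hb hab
      dsimp only
      rcases eq_or_lt_of_le ha with ha0 | ha0
      · have hb1 : b = 1 := by linarith
        rw [← ha0, hb1]
        simp only [EReal.coe_zero, EReal.coe_one, zero_mul, one_mul, zero_add, zero_smul,
          one_smul]
        exact le_refl _
      rcases eq_or_lt_of_le hb with hb0 | hb0
      · have ha1 : a = 1 := by linarith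
        rw [← hb0, ha1]
        simp only [EReal.coe_zero, EReal.coe_one, zero_mul, one_mul, add_zero, zero_smul,
          one_smul]
        exact le_refl _
      have hne : ∀ z : Fin n → ℝ, (⨅ u, extQuad2 Pxx Pxu Puu qx qu rg Fx Fu gg z u +
          extQuad PV qV rV FV gV (A.mulVec z + B.mulVec u + c)) ≠ ⊥ := by
        intro z
        rw [hSx, hSval]
        unfold extQuad
        split
        · exact EReal.coe_ne_bot _
        · simp
      by_cases hxf : ∃ u, F2x *ᵥ x + F2u *ᵥ u + g2 = 0
      · by_cases hyf : ∃ u, F2x *ᵥ y + F2u *ᵥ u + g2 = 0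
        · -- both feasible
          set ux := L *ᵥ x + d with huxdef
          set uy := L *ᵥ y + d with huydef
          have hx' : (⨅ u, extQuad2 Pxx Pxu Puu qx qu rg Fx Fu gg x u +
              extQuad PV qV rV FV gV (A.mulVec x + B.mulVec u + c))
              = extQuad2 Pxx Pxu Puu qx qu rg Fx Fu gg x ux +
                extQuad PV qV rV FV gV (A.mulVec x + B.mulVec ux + c) :=
            (hSx x).trans ((hattain x hxf).trans (hEq x ux).symm)
          have hy' : (⨅ u, extQuad2 Pxx Pxu Puu qx qu rg Fx Fu gg y u +
              extQuad PV qV rV FV gV (A.mulVec y + B.mulVec u + c))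
              = extQuad2 Pxx Pxu Puu qx qu rg Fx Fu gg y uy +
                extQuad PV qV rV FV gV (A.mulVec y + B.mulVec uy + c) :=
            (hSx y).trans ((hattain y hyf).trans (hEq y uy).symm)
          rw [hx', hy']
          refine le_trans (iInf_le _ (a • ux + b • uy)) ?_
          exact hconv x ux y uy a b ha hb hab
        · -- y infeasible : RHS = ⊤
          have hyT : (⨅ u, extQuad2 Pxx Pxu Puu qx qu rg Fx Fu gg y u +
              extQuad PV qV rV FV gV (A.mulVec y + B.mulVec u + c)) = ⊤ := by
            rw [hSx]
            refine iInf_eq_top.mpr (fun u => ?_)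
            unfold extQuad2
            rw [if_neg (fun h => hyf ⟨u, h⟩)]
          rw [hyT, EReal.coe_mul_top_of_pos hb0,
            EReal.add_top_of_ne_bot (bpq_mul_ne_bot a ha _ (hne x))]
          exact le_top
      · -- x infeasible : RHS = ⊤
        have hxT : (⨅ u, extQuad2 Pxx Pxu Puu qx qu rg Fx Fu gg x u +
            extQuad PV qV rV FV gV (A.mulVec x + B.mulVec u + c)) = ⊤ := by
          rw [hSx]
          refine iInf_eq_top.mpr (fun u => ?_)
          unfold extQuad2
          rw [if_neg (fun h => hxf ⟨u, h⟩)]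
        rw [hxT, EReal.coe_mul_top_of_pos ha0,
          EReal.top_add_of_ne_bot (bpq_mul_ne_bot b hb _ (hne y))]
        exact le_top
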